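/- Let T be a monad on Type u and α : Fin m → Fin n a function. The following are equivalent: (1) for every family of types X : Fin n → Type u and every p : (i : Fin n) → T (X i), one has (fun v => fun i => v (α i)) <$> ψ^Π p = ψ^Π (fun i => p (α i)); (2) T is α-commutative, i.e., for every single type X and every p : Fin n → T X, one has (fun v => v ∘ α) <$> ψ⁽ⁿ⁾ p = ψ⁽ᵐ⁾ (p ∘ α). -/

import Mathlib

universe u

/-- The canonical "double strength" `ψ` of a monad: first `p`, then `q`. -/
def monadPsi {T : Type u → Type u} [Monad T] {X Y : Type u} (p : T X) (q : T Y) :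
    T (X × Y) := do
  let x ← p
  let y ← q
  pure (x, y)

/-- The reversed double strength `ψ'` of a monad: first `q`, then `p`. -/
def monadPsi' {T : Type u → Type u} [Monad T] {X Y : Type u} (p : T X) (q : T Y) :
    T (X × Y) := do
  let y ← q
  let x ← p
  pure (x, y)

/-- The `n`-ary sequencing map `ψ⁽ⁿ⁾ : (Fin n → T X) → T (Fin n → X)`. -/
def monadPsiN {T : Type u → Type u} [Monad T] {X : Type u} :
    (n : ℕ) → (Fin n → T X) → T (Fin n → X)
  | 0, _ => pure Fin.elim0
  | n + 1, p => do
    let x ← p 0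
    let v ← monadPsiN n (p ∘ Fin.succ)
    pure (Fin.cons x v)

/-- `T` is `α`-commutative for a function `α : Fin m → Fin n`. -/
def AlphaCommutative (T : Type u → Type u) [Monad T] {m n : ℕ} (α : Fin m → Fin n) : Prop :=
  ∀ (X : Type u) (p : Fin n → T X),
    (fun v => v ∘ α) <$> monadPsiN n p = monadPsiN m (p ∘ α)

/-- `T` is commutative. -/
def MonadIsCommutative (T : Type u → Type u) [Monad T] : Prop :=
  ∀ (X Y : Type u) (p : T X) (q : T Y), monadPsi p q = monadPsi' p q

/-- `T` is affine. -/
def MonadIsAffine (T : Type u → Type u) [Monad T] : Prop :=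
  ∀ (X : Type u) (p : T X),
    (fun _ => PUnit.unit.{u + 1}) <$> p = (pure PUnit.unit.{u + 1} : T PUnit.{u + 1})

/-- `T` is relevant. -/
def MonadIsRelevant (T : Type u → Type u) [Monad T] : Prop :=
  ∀ (X : Type u) (p : T X), monadPsi p p = (fun x : X => (x, x)) <$> p

/-- The dependent `n`-ary sequencing map `ψ^Π`. -/
def monadPsiPi {T : Type u → Type u} [Monad T] :
    {n : ℕ} → {X : Fin n → Type u} → ((i : Fin n) → T (X i)) → T ((i : Fin n) → X i)
  | 0, _, _ => pure fun i => i.elim0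
  | _ + 1, _, p => do
    let x ← p 0
    let v ← monadPsiPi fun i => p i.succ
    pure (Fin.cons x v)

lemma psiPi_const {T : Type u → Type u} [Monad T] {X : Type u} :
    ∀ (n : ℕ) (p : Fin n → T X),
      monadPsiPi (X := fun _ => X) p = monadPsiN n p := by
  intro n
  induction n with
  | zero =>
    intro p
    simp only [monadPsiPi, monadPsiN]
  | succ n ih =>
    intro p
    simp only [monadPsiPi, monadPsiN]
    rw [ih (fun i => p i.succ)]
    rfl

lemma psiPi_nat {T : Type u → Type u} [Monad T] [LawfulMonad T] :
    ∀ {n : ℕ} {X Y : Fin n → Type u} (f : (i : Fin n) → X i → Y i)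
      (p : (i : Fin n) → T (X i)),
      monadPsiPi (fun i => f i <$> p i) =
        (fun v (i : Fin n) => f i (v i)) <$> monadPsiPi p := by
  intro n
  induction n with
  | zero =>
    intro X Y f p
    simp only [monadPsiPi, map_pure]
    exact congrArg pure (funext fun i => i.elim0)
  | succ n ih =>
    intro X Y f p
    simp only [monadPsiPi, map_bind, bind_map_left, bind_pure_comp, Functor.map_map]
    rw [ih (fun i => f i.succ) (fun i => p i.succ)]
    refine bind_congr fun x => ?_
    simp only [Functor.map_map]
    refine congrFun (congrArg _ ?_) _
    funext v
    funext i
    induction i using Fin.cases <;> simp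

theorem psiPi_reindex_iff_alphaCommutative
    {T : Type u → Type u} [Monad T] [LawfulMonad T] {m n : ℕ} (α : Fin m → Fin n) :
    (∀ (X : Fin n → Type u) (p : (i : Fin n) → T (X i)),
        (fun v : (i : Fin n) → X i => fun i : Fin m => v (α i)) <$> monadPsiPi p =
          monadPsiPi (fun i : Fin m => p (α i))) ↔
      AlphaCommutative T α := by
  constructor
  · intro h X p
    have h1 := h (fun _ => X) p
    rw [psiPi_const, psiPi_const] at h1
    exact h1
  · intro hα X p
    classical
    set F : ((j : Fin m) → X (α j)) → (Fin m → Σ i, X i) :=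
      fun w j => ⟨α j, w j⟩ with hFdef
    have key : F <$> ((fun v : (i : Fin n) → X i => fun j : Fin m => v (α j)) <$> monadPsiPi p)
        = F <$> monadPsiPi (fun j : Fin m => p (α j)) := by
      have k := hα (Σ i, X i) (fun i => (Sigma.mk i) <$> p i)
      rw [← psiPi_const, ← psiPi_const] at k
      have e1 : monadPsiPi (X := fun _ => Σ i, X i) (fun i : Fin n => (Sigma.mk i) <$> p i)
          = (fun v (i : Fin n) => (⟨i, v i⟩ : Σ i, X i)) <$> monadPsiPi p :=
        psiPi_nat (Y := fun _ => (Σ i, X i)) (fun i (x : X i) => ⟨i, x⟩) p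
      have e2 : monadPsiPi (X := fun _ => Σ i, X i) ((fun i : Fin n => (Sigma.mk i) <$> p i) ∘ α)
          = (fun w (j : Fin m) => (⟨α j, w j⟩ : Σ i, X i)) <$> monadPsiPi (fun j => p (α j)) :=
        psiPi_nat (Y := fun _ => (Σ i, X i)) (fun j (x : X (α j)) => (⟨α j, x⟩ : Σ i, X i)) (fun j => p (α j))
      rw [e1, e2] at k
      rw [Functor.map_map] at k ⊢
      exact k
    set b : T ((j : Fin m) → X (α j)) := monadPsiPi (fun j : Fin m => p (α j)) with hbdef
    set h : (Fin m → Σ i, X i) → T ((j : Fin m) → X (α j)) := fun s =>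
      if hc : ∀ j, (s j).1 = α j then pure (fun j => cast (congrArg X (hc j)) (s j).2) else b
      with hhdef
    have hF : ∀ w, h (F w) = pure w := by
      intro w
      have hc : ∀ j, ((F w j).1 = α j) := fun j => rfl
      simp only [hhdef]
      rw [dif_pos hc]
      exact congrArg pure (funext fun j => cast_eq_iff_heq.mpr HEq.rfl)
    have step : ∀ t : T ((j : Fin m) → X (α j)), (F <$> t) >>= h = t := by
      intro t
      rw [bind_map_left]
      calc t >>= (fun w => h (F w)) = t >>= pure := bind_congr fun w => hF w
      _ = t := bind_pure t
    calc (fun v : (i : Fin n) → X i => fun i : Fin m => v (α i)) <$> monadPsiPi p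
        = (F <$> ((fun v : (i : Fin n) → X i => fun i : Fin m => v (α i)) <$> monadPsiPi p)) >>= h :=
          (step _).symm
      _ = (F <$> b) >>= h := by rw [key]
      _ = b := step _
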